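/- Let 1 < α_D < 2, let F_R be a probability distribution on (0,∞) with ∫_0^∞ r^{α_D} dF_R(r) < ∞, and let m ≥ 1, z_1,…,z_m ∈ ℝ, t_1,…,t_m ≥ 0. Then ∫_{−∞}^{∞} ∫_0^{∞} ∫_0^{∞} min( (Σ_{j=1}^m z_j r L_{t_j}(s,u))^2 , |Σ_{j=1}^m z_j r L_{t_j}(s,u)| ) ds · α_D u^{−(α_D+1)} du · dF_R(r) < ∞. -/

import Mathlib

open MeasureTheory Set
open scoped ENNReal

/-- `L_t(s,u)`: the Lebesgue measure of `[0,t] ∩ [s,s+u]`. -/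
noncomputable def sessLen (t s u : ℝ) : ℝ :=
  (volume (Icc 0 t ∩ Icc s (s + u))).toReal

lemma sessLen_nonneg (t s u : ℝ) : 0 ≤ sessLen t s u := ENNReal.toReal_nonneg

lemma sessLen_le_left {t : ℝ} (ht : 0 ≤ t) (s u : ℝ) : sessLen t s u ≤ t := by
  have h : volume (Icc 0 t ∩ Icc s (s + u)) ≤ ENNReal.ofReal (t - 0) := by
    rw [← Real.volume_Icc]; exact measure_mono inter_subset_left
  calc sessLen t s u ≤ (ENNReal.ofReal (t - 0)).toReal :=
        ENNReal.toReal_mono ENNReal.ofReal_ne_top h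
    _ = t := by rw [ENNReal.toReal_ofReal (by linarith)]; ring

lemma sessLen_le_right (t : ℝ) {s u : ℝ} (hu : 0 ≤ u) : sessLen t s u ≤ u := by
  have h : volume (Icc 0 t ∩ Icc s (s + u)) ≤ ENNReal.ofReal (s + u - s) := by
    rw [← Real.volume_Icc]; exact measure_mono inter_subset_right
  calc sessLen t s u ≤ (ENNReal.ofReal (s + u - s)).toReal :=
        ENNReal.toReal_mono ENNReal.ofReal_ne_top h
    _ = u := by rw [ENNReal.toReal_ofReal (by linarith)]; ring

lemma sessLen_eq_zero_left {t s u : ℝ} (h : s + u < 0) : sessLen t s u = 0 := by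
  have : Icc 0 t ∩ Icc s (s + u) = ∅ := by
    ext x; simp only [mem_inter_iff, mem_Icc, mem_empty_iff_false, iff_false]
    rintro ⟨⟨hx0, _⟩, _, hx2⟩; linarith
  simp [sessLen, this]

lemma sessLen_eq_zero_right {t s u : ℝ} (h : t < s) : sessLen t s u = 0 := by
  have : Icc 0 t ∩ Icc s (s + u) = ∅ := by
    ext x; simp only [mem_inter_iff, mem_Icc, mem_empty_iff_false, iff_false]
    rintro ⟨⟨_, hx1⟩, hx2, _⟩; linarith
  simp [sessLen, this]

lemma u_integral_bound (αD : ℝ) (h1 : 1 < αD) (h2 : αD < 2) (T : ℝ) (hT : 1 ≤ T)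
    {a : ℝ} (ha : 0 ≤ a) :
    (∫⁻ u in Ioi (0 : ℝ), ENNReal.ofReal
        (min ((a * min u T) ^ 2) (a * min u T) * (T + u) * (αD * u ^ (-(αD + 1))))) ≤
    ENNReal.ofReal ((αD * T / (2 - αD) + αD / (3 - αD) + 2 * αD * T / (αD - 1))
        * (1 + a ^ αD)) := by
  have hT0 : (0:ℝ) < T := by linarith
  rcases eq_or_lt_of_le ha with h0 | hpos
  · -- a = 0
    have hz : ∀ u : ℝ,
        min ((a * min u T) ^ 2) (a * min u T) * (T + u) * (αD * u ^ (-(αD + 1))) = 0 := by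
      intro u; rw [← h0]; simp
    simp only [hz, ENNReal.ofReal_zero, lintegral_zero]
    exact zero_le
  -- 0 < a
  set u0 : ℝ := a⁻¹ with hu0def
  have hu0 : (0:ℝ) < u0 := inv_pos.mpr hpos
  have k : ∀ x : ℝ, u0 ^ x = a ^ (-x) := fun x => by
    rw [hu0def, Real.inv_rpow ha, ← Real.rpow_neg ha]
  have aA : a ^ (2:ℕ) * a ^ (αD - 2) = a ^ αD := by
    rw [← Real.rpow_natCast a 2, ← Real.rpow_add hpos]; norm_num
  have aB : a ^ (2:ℕ) * a ^ (αD - 3) = a ^ (αD - 1) := by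
    rw [← Real.rpow_natCast a 2, ← Real.rpow_add hpos]; ring_nf
  have aC : a * a ^ (αD - 1) = a ^ αD := by
    nth_rewrite 1 [← Real.rpow_one a]
    rw [← Real.rpow_add hpos]; ring_nf
  -- interval integrability facts
  have i1 : IntervalIntegrable (fun u : ℝ => u ^ (1 - αD)) volume 0 u0 :=
    intervalIntegral.intervalIntegrable_rpow' (by linarith)
  have i2 : IntervalIntegrable (fun u : ℝ => u ^ (2 - αD)) volume 0 u0 :=
    intervalIntegral.intervalIntegrable_rpow' (by linarith)
  -- split the domain
  rw [← Ioc_union_Ioi_eq_Ioi hu0.le, lintegral_union measurableSet_Ioi Ioc_disjoint_Ioi_same]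
  have piece1 : (∫⁻ u in Ioc (0:ℝ) u0, ENNReal.ofReal
        (min ((a * min u T) ^ 2) (a * min u T) * (T + u) * (αD * u ^ (-(αD + 1))))) ≤
      ENNReal.ofReal (αD * T / (2 - αD) * a ^ αD + αD / (3 - αD) * a ^ (αD - 1)) := by
    have step1 : (∫⁻ u in Ioc (0:ℝ) u0, ENNReal.ofReal
          (min ((a * min u T) ^ 2) (a * min u T) * (T + u) * (αD * u ^ (-(αD + 1))))) ≤
        ∫⁻ u in Ioc (0:ℝ) u0, ENNReal.ofReal
          (αD * a ^ 2 * (T * u ^ (1 - αD) + u ^ (2 - αD))) := by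
      refine lintegral_mono_ae ?_
      filter_upwards [ae_restrict_mem measurableSet_Ioc] with u hu
      have hu1 : (0:ℝ) < u := hu.1
      have hw0 : 0 ≤ αD * u ^ (-(αD + 1)) :=
        mul_nonneg (by linarith) (Real.rpow_nonneg hu1.le _)
      have hB0 : 0 ≤ a * min u T := mul_nonneg ha (le_min hu1.le hT0.le)
      refine ENNReal.ofReal_le_ofReal ?_
      have m1 : min ((a * min u T) ^ 2) (a * min u T) ≤ (a * u) ^ 2 := by
        refine (min_le_left _ _).trans ?_
        have : a * min u T ≤ a * u := mul_le_mul_of_nonneg_left (min_le_left _ _) ha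
        nlinarith
      have e1 : u ^ (2:ℕ) * u ^ (-(αD + 1)) = u ^ (1 - αD) := by
        rw [← Real.rpow_natCast u 2, ← Real.rpow_add hu1]; congr 1; push_cast; ring
      have e2 : u ^ (3:ℕ) * u ^ (-(αD + 1)) = u ^ (2 - αD) := by
        rw [← Real.rpow_natCast u 3, ← Real.rpow_add hu1]; congr 1; push_cast; ring
      calc min ((a * min u T) ^ 2) (a * min u T) * (T + u) * (αD * u ^ (-(αD + 1)))
          ≤ (a * u) ^ 2 * (T + u) * (αD * u ^ (-(αD + 1))) :=
            mul_le_mul_of_nonneg_right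
              (mul_le_mul_of_nonneg_right m1 (by linarith)) hw0
        _ = αD * a ^ 2 * (T * u ^ (1 - αD) + u ^ (2 - αD)) := by
            linear_combination (αD * a ^ 2 * T) * e1 + (αD * a ^ 2) * e2
    refine step1.trans ?_
    have hint : IntegrableOn (fun u : ℝ => αD * a ^ 2 * (T * u ^ (1 - αD) + u ^ (2 - αD)))
        (Ioc 0 u0) volume :=
      (intervalIntegrable_iff_integrableOn_Ioc_of_le hu0.le).mp
        (((i1.const_mul T).add i2).const_mul (αD * a ^ 2))
    have hnn : 0 ≤ᵐ[volume.restrict (Ioc (0:ℝ) u0)]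
        fun u : ℝ => αD * a ^ 2 * (T * u ^ (1 - αD) + u ^ (2 - αD)) := by
      filter_upwards [ae_restrict_mem measurableSet_Ioc] with u hu
      have hu1 : (0:ℝ) < u := hu.1
      exact mul_nonneg (mul_nonneg (by linarith) (sq_nonneg a))
        (add_nonneg (mul_nonneg hT0.le (Real.rpow_nonneg hu1.le _))
          (Real.rpow_nonneg hu1.le _))
    rw [← MeasureTheory.ofReal_integral_eq_lintegral_ofReal hint hnn]
    refine ENNReal.ofReal_le_ofReal ?_
    have hval : (∫ u in Ioc (0:ℝ) u0, αD * a ^ 2 * (T * u ^ (1 - αD) + u ^ (2 - αD)))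
        = αD * a ^ 2 * (T * (u0 ^ (2 - αD) / (2 - αD)) + u0 ^ (3 - αD) / (3 - αD)) := by
      rw [← intervalIntegral.integral_of_le hu0.le,
        intervalIntegral.integral_const_mul,
        intervalIntegral.integral_add (i1.const_mul T) i2,
        intervalIntegral.integral_const_mul,
        integral_rpow (Or.inl (by linarith : (-1:ℝ) < 1 - αD)),
        integral_rpow (Or.inl (by linarith : (-1:ℝ) < 2 - αD)),
        show (1:ℝ) - αD + 1 = 2 - αD by ring,
        show (2:ℝ) - αD + 1 = 3 - αD by ring,
        Real.zero_rpow (by linarith : (2:ℝ) - αD ≠ 0),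
        Real.zero_rpow (by linarith : (3:ℝ) - αD ≠ 0)]
      ring
    rw [hval]
    have k1 : u0 ^ (2 - αD) = a ^ (αD - 2) := by
      rw [k, show -(2 - αD) = αD - 2 from by ring]
    have k2 : u0 ^ (3 - αD) = a ^ (αD - 3) := by
      rw [k, show -(3 - αD) = αD - 3 from by ring]
    rw [k1, k2]
    have := aA; have := aB
    have goal_eq : αD * a ^ 2 * (T * (a ^ (αD - 2) / (2 - αD)) + a ^ (αD - 3) / (3 - αD))
        = αD * T / (2 - αD) * a ^ αD + αD / (3 - αD) * a ^ (αD - 1) := by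
      linear_combination (αD * T / (2 - αD)) * aA + (αD / (3 - αD)) * aB
    linarith [goal_eq.le, goal_eq.ge]
  have piece2 : (∫⁻ u in Ioi u0, ENNReal.ofReal
        (min ((a * min u T) ^ 2) (a * min u T) * (T + u) * (αD * u ^ (-(αD + 1))))) ≤
      ENNReal.ofReal (2 * αD * T / (αD - 1) * a ^ αD) := by
    have step1 : (∫⁻ u in Ioi u0, ENNReal.ofReal
          (min ((a * min u T) ^ 2) (a * min u T) * (T + u) * (αD * u ^ (-(αD + 1))))) ≤
        ∫⁻ u in Ioi u0, ENNReal.ofReal (2 * αD * T * a * u ^ (-αD)) := by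
      refine lintegral_mono_ae ?_
      filter_upwards [ae_restrict_mem measurableSet_Ioi] with u hu
      have hu1 : (0:ℝ) < u := hu0.trans hu
      have hw0 : 0 ≤ αD * u ^ (-(αD + 1)) :=
        mul_nonneg (by linarith) (Real.rpow_nonneg hu1.le _)
      refine ENNReal.ofReal_le_ofReal ?_
      have hmin : min u T * (T + u) ≤ 2 * T * u := by
        rcases le_total u T with h | h
        · rw [min_eq_left h]; nlinarith
        · rw [min_eq_right h]; nlinarith
      have e : u ^ (1:ℝ) * u ^ (-(αD + 1)) = u ^ (-αD) := by
        rw [← Real.rpow_add hu1]; congr 1; ring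
      rw [Real.rpow_one] at e
      calc min ((a * min u T) ^ 2) (a * min u T) * (T + u) * (αD * u ^ (-(αD + 1)))
          ≤ (a * min u T) * (T + u) * (αD * u ^ (-(αD + 1))) :=
            mul_le_mul_of_nonneg_right
              (mul_le_mul_of_nonneg_right (min_le_right _ _) (by linarith)) hw0
        _ = a * (min u T * (T + u)) * (αD * u ^ (-(αD + 1))) := by ring
        _ ≤ a * (2 * T * u) * (αD * u ^ (-(αD + 1))) :=
            mul_le_mul_of_nonneg_right (mul_le_mul_of_nonneg_left hmin ha) hw0
        _ = 2 * αD * T * a * u ^ (-αD) := by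
            linear_combination (2 * T * a * αD) * e
    refine step1.trans ?_
    have hint : IntegrableOn (fun u : ℝ => 2 * αD * T * a * u ^ (-αD)) (Ioi u0) volume :=
      (integrableOn_Ioi_rpow_of_lt (by linarith : -αD < -1) hu0).const_mul _
    have hnn : 0 ≤ᵐ[volume.restrict (Ioi u0)] fun u : ℝ => 2 * αD * T * a * u ^ (-αD) := by
      filter_upwards [ae_restrict_mem measurableSet_Ioi] with u hu
      have hu1 : (0:ℝ) < u := hu0.trans hu
      exact mul_nonneg (by positivity) (Real.rpow_nonneg hu1.le _)
    rw [← MeasureTheory.ofReal_integral_eq_lintegral_ofReal hint hnn]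
    refine ENNReal.ofReal_le_ofReal ?_
    rw [MeasureTheory.integral_const_mul, integral_Ioi_rpow_of_lt (by linarith) hu0]
    have k3 : u0 ^ (-αD + 1) = a ^ (αD - 1) := by
      rw [k, show -(-αD + 1) = αD - 1 from by ring]
    rw [k3, show -αD + 1 = -(αD - 1) from by ring]
    have goal_eq : 2 * αD * T * a * (-a ^ (αD - 1) / -(αD - 1))
        = 2 * αD * T / (αD - 1) * a ^ αD := by
      rw [neg_div_neg_eq]
      linear_combination (2 * αD * T / (αD - 1)) * aC
    linarith [goal_eq.le, goal_eq.ge]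
  refine le_trans (add_le_add piece1 piece2) ?_
  have hnn1 : 0 ≤ αD * T / (2 - αD) * a ^ αD + αD / (3 - αD) * a ^ (αD - 1) := by
    have := Real.rpow_nonneg ha αD
    have := Real.rpow_nonneg ha (αD - 1)
    have e1 : 0 ≤ αD * T / (2 - αD) := div_nonneg (by nlinarith) (by linarith)
    have e2 : 0 ≤ αD / (3 - αD) := div_nonneg (by linarith) (by linarith)
    nlinarith
  rw [← ENNReal.ofReal_add hnn1 (by
    have := Real.rpow_nonneg ha αD
    exact mul_nonneg (div_nonneg (by nlinarith) (by linarith)) this)]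
  refine ENNReal.ofReal_le_ofReal ?_
  have hx : 0 ≤ a ^ αD := Real.rpow_nonneg ha αD
  have h_pow : a ^ (αD - 1) ≤ 1 + a ^ αD := by
    rcases le_total a 1 with h | h
    · have : a ^ (αD - 1) ≤ 1 := Real.rpow_le_one ha h (by linarith)
      linarith
    · have : a ^ (αD - 1) ≤ a ^ αD :=
        Real.rpow_le_rpow_of_exponent_le h (by linarith)
      linarith
  have c1 : 0 ≤ αD * T / (2 - αD) := div_nonneg (by nlinarith) (by linarith)
  have c2 : 0 ≤ αD / (3 - αD) := div_nonneg (by linarith) (by linarith)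
  have c3 : 0 ≤ 2 * αD * T / (αD - 1) := div_nonneg (by nlinarith) (by linarith)
  nlinarith [mul_le_mul_of_nonneg_left h_pow c2, mul_nonneg c1 hx, mul_nonneg c3 hx]

/-- For `1 < α_D < 2` and a probability measure `F_R` on `(0,∞)` with finite
`α_D`-moment, the integral of `min((Σ_j z_j r L_{t_j}(s,u))², |Σ_j z_j r L_{t_j}(s,u)|)`
with respect to `ds · α_D u^{−(α_D+1)} du · F_R(dr)` is finite. -/
theorem min_sq_abs_integral_finite_moment
    (αD : ℝ) (h1 : 1 < αD) (h2 : αD < 2)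
    (ν : Measure ℝ) (hν : IsProbabilityMeasure ν) (hν0 : ν (Iic 0) = 0)
    (hmom : (∫⁻ r, ENNReal.ofReal (r ^ αD) ∂ν) < ⊤)
    (m : ℕ) (hm : 1 ≤ m) (z t : Fin m → ℝ) (ht : ∀ j, 0 ≤ t j) :
    (∫⁻ r,
      (∫⁻ u in Ioi (0 : ℝ),
        (∫⁻ s : ℝ, ENNReal.ofReal
            (min ((∑ j, z j * r * sessLen (t j) s u) ^ 2)
                 |∑ j, z j * r * sessLen (t j) s u|))
          * ENNReal.ofReal (αD * u ^ (-(αD + 1)))) ∂ν) < ⊤ := by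
  set Z : ℝ := ∑ j, |z j| with hZdef
  set T : ℝ := (∑ j, t j) + 1 with hTdef
  have hZ0 : 0 ≤ Z := Finset.sum_nonneg fun j _ => abs_nonneg _
  have hsum : 0 ≤ ∑ j, t j := Finset.sum_nonneg fun j _ => ht j
  have hT1 : 1 ≤ T := by simp only [hTdef]; linarith
  have hT0 : 0 < T := by linarith
  have htT : ∀ j, t j ≤ T := by
    intro j
    have := Finset.single_le_sum (f := t) (fun i _ => ht i) (Finset.mem_univ j)
    simp only [hTdef]; linarith
  -- bound on the sum
  have habs : ∀ (r u s : ℝ), 0 < u →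
      |∑ j, z j * r * sessLen (t j) s u| ≤ Z * |r| * min u T := by
    intro r u s hu
    calc |∑ j, z j * r * sessLen (t j) s u|
        ≤ ∑ j, |z j * r * sessLen (t j) s u| := Finset.abs_sum_le_sum_abs _ _
      _ ≤ ∑ j, |z j| * |r| * min u T := by
          refine Finset.sum_le_sum fun j _ => ?_
          rw [abs_mul, abs_mul, abs_of_nonneg (sessLen_nonneg _ _ _)]
          exact mul_le_mul_of_nonneg_left
            (le_min (sessLen_le_right _ hu.le) ((sessLen_le_left (ht j) s u).trans (htT j)))
            (mul_nonneg (abs_nonneg _) (abs_nonneg _))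
      _ = Z * |r| * min u T := by rw [hZdef]; rw [Finset.sum_mul, Finset.sum_mul]
  -- vanishing outside a compact s-interval
  have hzero : ∀ (r u s : ℝ), s ∉ Icc (-u) T →
      (∑ j, z j * r * sessLen (t j) s u) = 0 := by
    intro r u s hs
    refine Finset.sum_eq_zero fun j _ => ?_
    rw [mem_Icc, not_and_or] at hs
    rcases hs with hs | hs
    · push_neg at hs
      rw [sessLen_eq_zero_left (by linarith)]; ring
    · push_neg at hs
      rw [sessLen_eq_zero_right (lt_of_le_of_lt (htT j) hs)]; ring
  -- inner s-integral bound
  have hinner : ∀ (r u : ℝ), 0 < u →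
      (∫⁻ s : ℝ, ENNReal.ofReal
          (min ((∑ j, z j * r * sessLen (t j) s u) ^ 2)
               |∑ j, z j * r * sessLen (t j) s u|)) ≤
      ENNReal.ofReal (min ((Z * |r| * min u T) ^ 2) (Z * |r| * min u T))
        * ENNReal.ofReal (T + u) := by
    intro r u hu
    set B : ℝ := Z * |r| * min u T with hBdef
    have hB0 : 0 ≤ B := mul_nonneg (mul_nonneg hZ0 (abs_nonneg _)) (le_min hu.le hT0.le)
    calc (∫⁻ s : ℝ, ENNReal.ofReal
          (min ((∑ j, z j * r * sessLen (t j) s u) ^ 2)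
               |∑ j, z j * r * sessLen (t j) s u|))
        ≤ ∫⁻ s : ℝ, (Icc (-u) T).indicator
            (fun _ => ENNReal.ofReal (min (B ^ 2) B)) s := by
          refine lintegral_mono fun s => ?_
          by_cases hs : s ∈ Icc (-u) T
          · rw [indicator_of_mem hs]
            refine ENNReal.ofReal_le_ofReal (min_le_min ?_ (habs r u s hu))
            have h := habs r u s hu
            calc (∑ j, z j * r * sessLen (t j) s u) ^ 2
                = |∑ j, z j * r * sessLen (t j) s u| ^ 2 := (sq_abs _).symm
              _ ≤ B ^ 2 := by nlinarith [abs_nonneg (∑ j, z j * r * sessLen (t j) s u)]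
          · rw [indicator_of_notMem hs, hzero r u s hs]
            simp
      _ = ENNReal.ofReal (min (B ^ 2) B) * volume (Icc (-u) T) := by
          rw [lintegral_indicator measurableSet_Icc, setLIntegral_const]
      _ = ENNReal.ofReal (min (B ^ 2) B) * ENNReal.ofReal (T + u) := by
          rw [Real.volume_Icc]; ring_nf
  -- bound per r
  have hu_bound : ∀ r : ℝ,
      (∫⁻ u in Ioi (0 : ℝ),
        (∫⁻ s : ℝ, ENNReal.ofReal
            (min ((∑ j, z j * r * sessLen (t j) s u) ^ 2)
                 |∑ j, z j * r * sessLen (t j) s u|))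
          * ENNReal.ofReal (αD * u ^ (-(αD + 1)))) ≤
      ENNReal.ofReal ((αD * T / (2 - αD) + αD / (3 - αD) + 2 * αD * T / (αD - 1))
        * (1 + (Z * |r|) ^ αD)) := by
    intro r
    set a : ℝ := Z * |r| with hadef
    have ha0 : 0 ≤ a := mul_nonneg hZ0 (abs_nonneg _)
    refine le_trans ?_ (u_integral_bound αD h1 h2 T hT1 ha0)
    refine lintegral_mono_ae ?_
    filter_upwards [ae_restrict_mem measurableSet_Ioi] with u hu'
    have hu : (0:ℝ) < u := hu'
    have hw0 : 0 ≤ αD * u ^ (-(αD + 1)) :=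
      mul_nonneg (by linarith) (Real.rpow_nonneg (le_of_lt hu) _)
    have hmin0 : 0 ≤ min ((a * min u T) ^ 2) (a * min u T) :=
      le_min (sq_nonneg _) (mul_nonneg ha0 (le_min (le_of_lt hu) hT0.le))
    calc (∫⁻ s : ℝ, ENNReal.ofReal
            (min ((∑ j, z j * r * sessLen (t j) s u) ^ 2)
                 |∑ j, z j * r * sessLen (t j) s u|))
          * ENNReal.ofReal (αD * u ^ (-(αD + 1)))
        ≤ (ENNReal.ofReal (min ((a * min u T) ^ 2) (a * min u T))
            * ENNReal.ofReal (T + u)) * ENNReal.ofReal (αD * u ^ (-(αD + 1))) :=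
          mul_le_mul_left (hinner r u hu) _
      _ = ENNReal.ofReal
            (min ((a * min u T) ^ 2) (a * min u T) * (T + u) * (αD * u ^ (-(αD + 1)))) := by
          rw [ENNReal.ofReal_mul (mul_nonneg hmin0 (by linarith : (0:ℝ) ≤ T + u)),
            ENNReal.ofReal_mul hmin0]
  -- conclude
  have hae : ∀ᵐ r ∂ν, 0 < r := by
    rw [ae_iff]
    have : {r : ℝ | ¬ 0 < r} = Iic 0 := by ext x; simp [not_lt]
    rw [this]; exact hν0
  set K : ℝ := αD * T / (2 - αD) + αD / (3 - αD) + 2 * αD * T / (αD - 1) with hKdef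
  have hK0 : 0 ≤ K := by
    have e1 : 0 ≤ αD * T / (2 - αD) :=
      div_nonneg (mul_nonneg (by linarith) hT0.le) (by linarith)
    have e2 : 0 ≤ αD / (3 - αD) := div_nonneg (by linarith) (by linarith)
    have e3 : 0 ≤ 2 * αD * T / (αD - 1) :=
      div_nonneg (mul_nonneg (by linarith) hT0.le) (by linarith)
    rw [hKdef]; linarith
  have hfin : (∫⁻ r, (ENNReal.ofReal K + ENNReal.ofReal (K * Z ^ αD)
          * ENNReal.ofReal (r ^ αD)) ∂ν) < ⊤ := by
    rw [lintegral_add_left measurable_const,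
      lintegral_const_mul' _ _ ENNReal.ofReal_ne_top, lintegral_const]
    refine ENNReal.add_lt_top.mpr ⟨?_, ?_⟩
    · exact ENNReal.mul_lt_top ENNReal.ofReal_lt_top (measure_lt_top _ _)
    · exact ENNReal.mul_lt_top ENNReal.ofReal_lt_top hmom
  refine lt_of_le_of_lt (lintegral_mono_ae ?_) hfin
  filter_upwards [hae] with r hr
  refine le_trans (hu_bound r) ?_
  rw [abs_of_pos hr, Real.mul_rpow hZ0 hr.le, mul_add, mul_one, ← mul_assoc]
  refine le_trans (ENNReal.ofReal_add_le) ?_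
  rw [ENNReal.ofReal_mul (mul_nonneg hK0 (Real.rpow_nonneg hZ0 _))]
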